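/- arXiv:1707.07269 — 2 statements merged into one kernel-verified Lean document; each statement's English description precedes it below -/
import Mathlib

section
/- Let X, X' ∼ N(0,1) and Y, Y' ∼ N(μ,1) all independent, and k_ν the Gaussian kernel with bandwidth ν. Then MMD² := E[k_ν(X,X')] - 2E[k_ν(X,Y)] + E[k_ν(Y,Y')] = (2ν/√(ν²+2)) (1 - exp(-μ²/(2(ν²+2)))). -/
open MeasureTheory ProbabilityTheory Real Complex
open scoped NNReal ENNReal

lemma integral_rexp_quad {b : ℝ} (hb : 0 < b) (c d : ℝ) :
    ∫ x : ℝ, Real.exp (-b * x ^ 2 + c * x + d)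
      = Real.sqrt (π / b) * Real.exp (d + c ^ 2 / (4 * b)) := by
  have h := integral_cexp_quadratic (b := (-b : ℂ)) (by simpa using hb) (c : ℂ) (d : ℂ)
  have h1 : ∀ x : ℝ, Complex.exp ((-b : ℂ) * x ^ 2 + c * x + d)
      = ((Real.exp (-b * x ^ 2 + c * x + d) : ℝ) : ℂ) := by
    intro x; rw [Complex.ofReal_exp]; push_cast; ring_nf
  simp_rw [h1] at h
  have h2 : ((π / -(-b : ℂ)) : ℂ) ^ (1 / 2 : ℂ) = ((Real.sqrt (π / b) : ℝ) : ℂ) := by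
    rw [neg_neg, Real.sqrt_eq_rpow]
    rw [show ((π : ℂ) / (b : ℂ)) = ((π / b : ℝ) : ℂ) by push_cast; ring]
    rw [show (1 / 2 : ℂ) = ((1 / 2 : ℝ) : ℂ) by push_cast; ring]
    rw [← Complex.ofReal_cpow (by positivity)]
  have h3 : Complex.exp ((d : ℂ) - (c : ℂ) ^ 2 / (4 * (-b : ℂ)))
      = ((Real.exp (d + c ^ 2 / (4 * b)) : ℝ) : ℂ) := by
    rw [Complex.ofReal_exp]; push_cast; congr 1; field_simp; ring
  rw [h2, h3, ← Complex.ofReal_mul] at h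
  apply Complex.ofReal_injective
  rw [← h]
  exact (integral_ofReal (𝕜 := ℂ)).symm

lemma gauss_exp_int {s : ℝ} (hs : 0 < s) (a m : ℝ) :
    ∫ x : ℝ, Real.exp (-(x - a) ^ 2 / (2 * s)) ∂(gaussianReal m 1)
      = Real.sqrt (s / (s + 1)) * Real.exp (-(a - m) ^ 2 / (2 * (s + 1))) := by
  rw [gaussianReal_of_var_ne_zero m one_ne_zero]
  have hmeas : Measurable fun x => Real.toNNReal (gaussianPDFReal m 1 x) :=
    (measurable_gaussianPDFReal m 1).real_toNNReal
  rw [show gaussianPDF m 1 = fun x => ((Real.toNNReal (gaussianPDFReal m 1 x) : ℝ≥0) : ℝ≥0∞)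
      from rfl]
  rw [integral_withDensity_eq_integral_smul hmeas]
  have hint : ∀ x : ℝ, Real.toNNReal (gaussianPDFReal m 1 x) • Real.exp (-(x - a) ^ 2 / (2 * s))
      = (Real.sqrt (2 * π))⁻¹
        * Real.exp (-((s + 1) / (2 * s)) * x ^ 2 + (m + a / s) * x
            + (-m ^ 2 / 2 - a ^ 2 / (2 * s))) := by
    intro x
    rw [NNReal.smul_def, Real.coe_toNNReal _ (gaussianPDFReal_nonneg m 1 x), smul_eq_mul,
      gaussianPDFReal]
    push_cast
    rw [mul_one, mul_assoc, ← Real.exp_add]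
    congr 1
    field_simp
    ring
  simp_rw [hint]
  rw [integral_const_mul, integral_rexp_quad (by positivity)]
  rw [show Real.sqrt (π / ((s + 1) / (2 * s))) = Real.sqrt (2 * π) * Real.sqrt (s / (s + 1)) by
    rw [← Real.sqrt_mul (by positivity)]; congr 1; field_simp]
  have h2 : -m ^ 2 / 2 - a ^ 2 / (2 * s) + (m + a / s) ^ 2 / (4 * ((s + 1) / (2 * s)))
      = -(a - m) ^ 2 / (2 * (s + 1)) := by
    field_simp
    ring
  rw [h2]
  rw [show (Real.sqrt (2*π))⁻¹ * (Real.sqrt (2*π) * Real.sqrt (s/(s+1)) * Real.exp (-(a-m)^2/(2*(s+1))))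
      = (Real.sqrt (2*π))⁻¹ * Real.sqrt (2*π) * (Real.sqrt (s/(s+1)) * Real.exp (-(a-m)^2/(2*(s+1)))) by ring]
  rw [inv_mul_cancel₀ (by positivity), one_mul]

lemma cross_term {Ω : Type*} {mΩ : MeasurableSpace Ω} (P : Measure Ω)
    [IsProbabilityMeasure P] {X Y : Ω → ℝ} {mX mY ν : ℝ} (hν : 0 < ν)
    (hXm : Measurable X) (hYm : Measurable Y) (hind : IndepFun X Y P)
    (hX : Measure.map X P = gaussianReal mX 1) (hY : Measure.map Y P = gaussianReal mY 1) :
    ∫ ω, Real.exp (-(X ω - Y ω) ^ 2 / (2 * ν ^ 2)) ∂P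
      = ν / Real.sqrt (ν ^ 2 + 2) * Real.exp (-(mX - mY) ^ 2 / (2 * (ν ^ 2 + 2))) := by
  have hmap : Measure.map (fun ω => (X ω, Y ω)) P
      = (gaussianReal mX 1).prod (gaussianReal mY 1) := by
    rw [← hX, ← hY]
    exact (indepFun_iff_map_prod_eq_prod_map_map hXm.aemeasurable hYm.aemeasurable).mp hind
  set f : ℝ × ℝ → ℝ := fun p => Real.exp (-(p.1 - p.2) ^ 2 / (2 * ν ^ 2)) with hf
  have hfc : Continuous f := by fun_prop
  have h1 : ∫ ω, Real.exp (-(X ω - Y ω) ^ 2 / (2 * ν ^ 2)) ∂P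
      = ∫ p, f p ∂((gaussianReal mX 1).prod (gaussianReal mY 1)) := by
    rw [← hmap, integral_map (hXm.prodMk hYm).aemeasurable hfc.aestronglyMeasurable]
  rw [h1]
  have hfi : Integrable f ((gaussianReal mX 1).prod (gaussianReal mY 1)) := by
    refine (integrable_const (1 : ℝ)).mono' hfc.aestronglyMeasurable (ae_of_all _ fun p => ?_)
    rw [Real.norm_eq_abs, abs_of_pos (Real.exp_pos _)]
    rw [Real.exp_le_one_iff]
    apply div_nonpos_of_nonpos_of_nonneg
    · nlinarith [sq_nonneg (p.1 - p.2)]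
    · positivity
  rw [integral_prod _ hfi]
  have hinner : ∀ x : ℝ, (∫ y, f (x, y) ∂(gaussianReal mY 1))
      = Real.sqrt (ν ^ 2 / (ν ^ 2 + 1))
        * Real.exp (-(x - mY) ^ 2 / (2 * (ν ^ 2 + 1))) := by
    intro x
    have : ∀ y : ℝ, f (x, y) = Real.exp (-(y - x) ^ 2 / (2 * ν ^ 2)) := by
      intro y; rw [hf]; ring_nf
    simp_rw [this]
    rw [gauss_exp_int (by positivity) x mY]
  simp_rw [hinner]
  rw [integral_const_mul, gauss_exp_int (by positivity) mY mX]
  rw [← mul_assoc, ← Real.sqrt_mul (by positivity)]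
  have h2 : ν ^ 2 / (ν ^ 2 + 1) * ((ν ^ 2 + 1) / (ν ^ 2 + 1 + 1)) = ν ^ 2 / (ν ^ 2 + 2) := by
    field_simp; ring
  rw [h2, show (ν:ℝ)^2 / (ν^2+2) = ν^2 * (ν^2+2)⁻¹ by ring, Real.sqrt_mul (by positivity),
    Real.sqrt_sq hν.le, Real.sqrt_inv, show ν * (Real.sqrt (ν^2+2))⁻¹ = ν / Real.sqrt (ν^2+2) by ring]
  congr 2
  ring


theorem stmt_14 {Ω : Type*} {mΩ : MeasurableSpace Ω} (P : Measure Ω)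
    [IsProbabilityMeasure P] (X X' Y Y' : Ω → ℝ) (μ ν : ℝ) (hν : 0 < ν)
    (hXm : Measurable X) (hX'm : Measurable X')
    (hYm : Measurable Y) (hY'm : Measurable Y')
    (hindep : iIndepFun (m := fun _ : Fin 4 => (inferInstance : MeasurableSpace ℝ))
      ![X, X', Y, Y'] P)
    (hX : Measure.map X P = gaussianReal 0 1)
    (hX' : Measure.map X' P = gaussianReal 0 1)
    (hY : Measure.map Y P = gaussianReal μ 1)
    (hY' : Measure.map Y' P = gaussianReal μ 1) :
    (∫ ω, Real.exp (-(X ω - X' ω)^2 / (2 * ν^2)) ∂P)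
      - 2 * (∫ ω, Real.exp (-(X ω - Y ω)^2 / (2 * ν^2)) ∂P)
      + (∫ ω, Real.exp (-(Y ω - Y' ω)^2 / (2 * ν^2)) ∂P)
      = (2 * ν / Real.sqrt (ν^2 + 2)) * (1 - Real.exp (-μ^2 / (2 * (ν^2 + 2)))) := by
  have h01 : IndepFun X X' P := by
    simpa using hindep.indepFun (i := 0) (j := 1) (by decide)
  have h02 : IndepFun X Y P := by
    simpa using hindep.indepFun (i := 0) (j := 2) (by decide)
  have h23 : IndepFun Y Y' P := by
    simpa using hindep.indepFun (i := 2) (j := 3) (by decide)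
  rw [cross_term P hν hXm hX'm h01 hX hX', cross_term P hν hXm hYm h02 hX hY,
    cross_term P hν hYm hY'm h23 hY hY']
  rw [show -((0:ℝ) - 0) ^ 2 / (2 * (ν ^ 2 + 2)) = 0 by ring, show -((μ:ℝ) - μ) ^ 2 / (2 * (ν ^ 2 + 2)) = 0 by ring,
    Real.exp_zero, show -((0:ℝ) - μ) ^ 2 / (2 * (ν ^ 2 + 2)) = -μ^2 / (2 * (ν ^ 2 + 2)) by ring]
  ring
end

section
/- Let X, X' ∼ N(0,1) and Y, Y' ∼ N(0,σ²) all independent, and k_ν the Gaussian kernel with bandwidth ν. Then MMD² := E[k_ν(X,X')] - 2E[k_ν(X,Y)] + E[k_ν(Y,Y')] = ν(1/√(ν²+2) + 1/√(ν²+2σ²) - 2/√(ν²+σ²+1)). -/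
open MeasureTheory ProbabilityTheory
open scoped NNReal ENNReal Real

lemma quadInt {b : ℝ} (hb : 0 < b) (c : ℝ) :
    ∫ x : ℝ, Real.exp (-b * x ^ 2 + c * x) = Real.sqrt (π / b) * Real.exp (c ^ 2 / (4 * b)) := by
  have h : ∀ x : ℝ, -b * x ^ 2 + c * x = -b * (x - c / (2 * b)) ^ 2 + c ^ 2 / (4 * b) := by
    intro x; field_simp; ring
  simp_rw [h, Real.exp_add, integral_mul_const]
  rw [integral_sub_right_eq_self (fun x : ℝ => Real.exp (-b * x ^ 2)) (c / (2 * b)),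
    integral_gaussian]

lemma gaussInt {t : ℝ} (ht : 0 < t) {v : ℝ≥0} (hv : (0:ℝ) < v) (y : ℝ) :
    ∫ x, Real.exp (-(x - y)^2 / (2*t)) ∂(gaussianReal 0 v)
      = Real.sqrt (t/(t+v)) * Real.exp (-y^2/(2*(t+v))) := by
  have hv0 : v ≠ 0 := fun h => by simp [h] at hv
  have hvc : (v:ℝ) ≠ 0 := hv.ne'
  rw [gaussianReal_of_var_ne_zero 0 hv0]
  have hpdf : (gaussianPDF 0 v) = fun x => ((Real.toNNReal (gaussianPDFReal 0 v x) : ℝ≥0) : ℝ≥0∞) := by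
    ext x; rw [gaussianPDF_def]; rfl
  rw [hpdf, integral_withDensity_eq_integral_smul
    ((measurable_gaussianPDFReal 0 v).real_toNNReal) _]
  have h1 : ∀ x : ℝ, (Real.toNNReal (gaussianPDFReal 0 v x)) • Real.exp (-(x - y)^2 / (2*t))
      = (Real.sqrt (2 * π * v))⁻¹ * (Real.exp (-(1/(2*t) + 1/(2*v)) * x ^ 2 + (y/t) * x) * Real.exp (-y^2/(2*t))) := by
    intro x
    have hexp : -(x-(0:ℝ))^2/(2*(v:ℝ)) + -(x - y)^2 / (2*t)
        = (-(1/(2*t) + 1/(2*(v:ℝ))) * x ^ 2 + (y/t) * x) + -y^2/(2*t) := by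
      field_simp
      ring
    rw [NNReal.smul_def, Real.coe_toNNReal _ (gaussianPDFReal_nonneg 0 v x), gaussianPDFReal]
    rw [smul_eq_mul, mul_assoc, ← Real.exp_add, hexp, Real.exp_add]
  simp_rw [h1]
  rw [integral_const_mul, integral_mul_const]
  have hb : 0 < 1/(2*t) + 1/(2*(v:ℝ)) := by positivity
  rw [quadInt hb]
  have htv : (0:ℝ) < t + v := by positivity
  have e2 : Real.exp ((y/t) ^ 2 / (4 * (1/(2*t) + 1/(2*(v:ℝ))))) * Real.exp (-y^2/(2*t))
      = Real.exp (-y^2/(2*(t+v))) := by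
    rw [← Real.exp_add]
    congr 1
    field_simp
    ring
  have e3 : (Real.sqrt (2 * π * v))⁻¹ * Real.sqrt (π / (1/(2*t) + 1/(2*(v:ℝ))))
      = Real.sqrt (t/(t+v)) := by
    rw [← Real.sqrt_inv, ← Real.sqrt_mul (by positivity)]
    congr 1
    field_simp
    ring
  calc (Real.sqrt (2 * π * v))⁻¹ * (Real.sqrt (π / (1/(2*t) + 1/(2*(v:ℝ)))) * Real.exp ((y/t) ^ 2 / (4 * (1/(2*t) + 1/(2*(v:ℝ))))) * Real.exp (-y^2/(2*t)))
      = ((Real.sqrt (2 * π * v))⁻¹ * Real.sqrt (π / (1/(2*t) + 1/(2*(v:ℝ))))) * (Real.exp ((y/t) ^ 2 / (4 * (1/(2*t) + 1/(2*(v:ℝ))))) * Real.exp (-y^2/(2*t))) := by ring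
    _ = Real.sqrt (t/(t+v)) * Real.exp (-y^2/(2*(t+v))) := by rw [e2, e3]

lemma pairInt {ν : ℝ} (hν : 0 < ν) {a b : ℝ≥0} (ha : (0:ℝ) < a) (hb : (0:ℝ) < b)
    {Ω : Type*} {mΩ : MeasurableSpace Ω} (P : Measure Ω) [IsProbabilityMeasure P]
    {U V : Ω → ℝ} (hU : Measurable U) (hV : Measurable V)
    (hUV : IndepFun U V P) (hUd : Measure.map U P = gaussianReal 0 a)
    (hVd : Measure.map V P = gaussianReal 0 b) :
    ∫ ω, Real.exp (-(U ω - V ω)^2/(2*ν^2)) ∂P = ν / Real.sqrt (ν^2 + a + b) := by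
  have ht : (0:ℝ) < ν^2 := by positivity
  have hmap : Measure.map (fun ω => (U ω, V ω)) P
      = (gaussianReal 0 a).prod (gaussianReal 0 b) := by
    rw [← hUd, ← hVd]
    exact (indepFun_iff_map_prod_eq_prod_map_map hU.aemeasurable hV.aemeasurable).mp hUV
  have hfm : Measurable (fun p : ℝ × ℝ => Real.exp (-(p.1 - p.2)^2/(2*ν^2))) := by
    fun_prop
  have hInt : Integrable (fun p : ℝ × ℝ => Real.exp (-(p.1 - p.2)^2/(2*ν^2)))
      ((gaussianReal 0 a).prod (gaussianReal 0 b)) := by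
    apply Integrable.mono' (integrable_const 1) hfm.aestronglyMeasurable
    filter_upwards with p
    rw [Real.norm_eq_abs, abs_of_pos (Real.exp_pos _)]
    exact Real.exp_le_one_iff.mpr
      (div_nonpos_of_nonpos_of_nonneg (neg_nonpos.mpr (sq_nonneg _)) (by positivity))
  have step1 : ∫ ω, Real.exp (-(U ω - V ω)^2/(2*ν^2)) ∂P
      = ∫ p : ℝ × ℝ, Real.exp (-(p.1 - p.2)^2/(2*ν^2))
          ∂((gaussianReal 0 a).prod (gaussianReal 0 b)) := by
    rw [← hmap, integral_map (hU.prodMk hV).aemeasurable hfm.aestronglyMeasurable]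
  rw [step1, integral_prod _ hInt]
  have inner : ∀ x : ℝ, ∫ y, Real.exp (-(x - y)^2/(2*ν^2)) ∂(gaussianReal 0 b)
      = Real.sqrt (ν^2/(ν^2+b)) * Real.exp (-x^2/(2*(ν^2+b))) := by
    intro x
    have h := gaussInt (t := ν^2) ht hb x
    simp_rw [show ∀ y : ℝ, -(x - y)^2 = -(y - x)^2 by intro y; ring]
    exact h
  simp_rw [inner]
  rw [integral_const_mul]
  have h2 := gaussInt (t := ν^2 + b) (by positivity) ha 0
  simp_rw [sub_zero] at h2
  rw [h2]
  have he : Real.exp (-(0:ℝ)^2/(2*(ν^2+(b:ℝ)+(a:ℝ)))) = 1 := by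
    norm_num
  rw [he, mul_one, ← Real.sqrt_mul (by positivity)]
  have e : ν^2/(ν^2+(b:ℝ)) * ((ν^2+(b:ℝ))/(ν^2+(b:ℝ)+(a:ℝ))) = ν^2/(ν^2+(a:ℝ)+(b:ℝ)) := by
    have h1 : ν^2+(b:ℝ) ≠ 0 := by positivity
    field_simp
    ring
  rw [e, Real.sqrt_div (sq_nonneg ν), Real.sqrt_sq hν.le]

theorem stmt_15 {Ω : Type*} {mΩ : MeasurableSpace Ω} (P : Measure Ω)
    [IsProbabilityMeasure P] (X X' Y Y' : Ω → ℝ) (σ ν : ℝ) (hν : 0 < ν) (hσ : 0 < σ)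
    (hXm : Measurable X) (hX'm : Measurable X')
    (hYm : Measurable Y) (hY'm : Measurable Y')
    (hindep : iIndepFun (m := fun _ : Fin 4 => (inferInstance : MeasurableSpace ℝ))
      ![X, X', Y, Y'] P)
    (hX : Measure.map X P = gaussianReal 0 1)
    (hX' : Measure.map X' P = gaussianReal 0 1)
    (hY : Measure.map Y P = gaussianReal 0 (Real.toNNReal (σ^2)))
    (hY' : Measure.map Y' P = gaussianReal 0 (Real.toNNReal (σ^2))) :
    (∫ ω, Real.exp (-(X ω - X' ω)^2 / (2 * ν^2)) ∂P)
      - 2 * (∫ ω, Real.exp (-(X ω - Y ω)^2 / (2 * ν^2)) ∂P)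
      + (∫ ω, Real.exp (-(Y ω - Y' ω)^2 / (2 * ν^2)) ∂P)
      = ν * (1 / Real.sqrt (ν^2 + 2) + 1 / Real.sqrt (ν^2 + 2*σ^2)
          - 2 / Real.sqrt (ν^2 + σ^2 + 1)) := by
  have hσ2 : ((Real.toNNReal (σ^2)) : ℝ) = σ^2 := Real.coe_toNNReal _ (sq_nonneg σ)
  have hσ2pos : (0:ℝ) < (Real.toNNReal (σ^2)) := by rw [hσ2]; positivity
  have h1pos : (0:ℝ) < ((1:ℝ≥0):ℝ) := by norm_num
  have iXX' : IndepFun X X' P := by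
    have := hindep.indepFun (i := 0) (j := 1) (by decide)
    simpa using this
  have iXY : IndepFun X Y P := by
    have := hindep.indepFun (i := 0) (j := 2) (by decide)
    simpa using this
  have iYY' : IndepFun Y Y' P := by
    have := hindep.indepFun (i := 2) (j := 3) (by decide)
    simpa using this
  have E1 := pairInt hν h1pos h1pos P hXm hX'm iXX' hX hX'
  have E2 := pairInt hν h1pos hσ2pos P hXm hYm iXY hX hY
  have E3 := pairInt hν hσ2pos hσ2pos P hYm hY'm iYY' hY hY'
  rw [hσ2] at E2 E3
  simp only [NNReal.coe_one] at E1 E2 E3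
  rw [E1, E2, E3]
  rw [show ν^2 + 1 + 1 = ν^2 + 2 by ring, show ν^2 + 1 + σ^2 = ν^2 + σ^2 + 1 by ring,
    show ν^2 + σ^2 + σ^2 = ν^2 + 2*σ^2 by ring]
  ring
end
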